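/- Let Z be a normal random variable with mean μ ∈ ℝ and standard deviation σ > 0, and let a be a real number. Then E[|Z| e^{-a|Z|}] = −aσ² e^{a²σ²/2} ( e^{aμ} Φ(−(μ + aσ²)/σ) + e^{-aμ} Φ((μ − aσ²)/σ) ) − μ e^{a²σ²/2} ( e^{aμ} Φ(−(μ + aσ²)/σ) − e^{-aμ} Φ((μ − aσ²)/σ) ) + σ √(2/π) e^{-μ²/(2σ²)}, where Φ denotes the cumulative distribution function of the standard normal distribution. -/

import Mathlib

open MeasureTheory ProbabilityTheory

/-- The standard normal cumulative distribution function. -/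
noncomputable def stdNormalCDF (z : ℝ) : ℝ :=
  ∫ y in Set.Iic z, (Real.sqrt (2 * Real.pi))⁻¹ * Real.exp (-y ^ 2 / 2)

open Real Set Filter

noncomputable def npdf (σ m x : ℝ) : ℝ :=
  (Real.sqrt (2 * Real.pi * σ ^ 2))⁻¹ * Real.exp (-(x - m) ^ 2 / (2 * σ ^ 2))

lemma setIntegral_comp_add_right_Ioi (f : ℝ → ℝ) (c d : ℝ) :
    ∫ x in Ioi c, f (x + d) = ∫ x in Ioi (c + d), f x := by
  rw [← integral_indicator measurableSet_Ioi, ← integral_indicator measurableSet_Ioi,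
    ← integral_add_right_eq_self (Set.indicator (Ioi (c + d)) f) d]
  congr 1
  ext x
  simp only [Set.indicator_apply, mem_Ioi, add_lt_add_iff_right]

lemma integrable_npdf {σ : ℝ} (hσ : 0 < σ) (m : ℝ) : Integrable (npdf σ m) := by
  have h := (integrable_exp_neg_mul_sq (b := (2 * σ ^ 2)⁻¹) (by positivity)).comp_sub_right m
  have h2 := h.const_mul (Real.sqrt (2 * Real.pi * σ ^ 2))⁻¹
  refine h2.congr (Eventually.of_forall fun x => ?_)
  dsimp only
  unfold npdf
  rw [show -(x - m) ^ 2 / (2 * σ ^ 2) = -(2 * σ ^ 2)⁻¹ * (x - m) ^ 2 from by ring]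

lemma integrable_sub_mul_npdf {σ : ℝ} (hσ : 0 < σ) (m : ℝ) :
    Integrable (fun x => (x - m) * npdf σ m x) := by
  have h := (integrable_mul_exp_neg_mul_sq (b := (2 * σ ^ 2)⁻¹) (by positivity)).comp_sub_right m
  have h2 := h.const_mul (Real.sqrt (2 * Real.pi * σ ^ 2))⁻¹
  refine h2.congr (Eventually.of_forall fun x => ?_)
  dsimp only
  unfold npdf
  rw [show -(x - m) ^ 2 / (2 * σ ^ 2) = -(2 * σ ^ 2)⁻¹ * (x - m) ^ 2 from by ring]
  ring

lemma integrable_id_mul_npdf {σ : ℝ} (hσ : 0 < σ) (m : ℝ) :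
    Integrable (fun x => x * npdf σ m x) := by
  have h := (integrable_sub_mul_npdf hσ m).add ((integrable_npdf hσ m).const_mul m)
  refine h.congr (Eventually.of_forall fun x => ?_)
  simp only [Pi.add_apply]
  ring

lemma sqrt_two_pi_sq {σ : ℝ} (hσ : 0 < σ) :
    Real.sqrt (2 * Real.pi * σ ^ 2) = Real.sqrt (2 * Real.pi) * σ := by
  rw [Real.sqrt_mul (by positivity), Real.sqrt_sq hσ.le]

lemma integral_npdf_Ioi {σ : ℝ} (hσ : 0 < σ) (m : ℝ) :
    ∫ x in Ioi (0 : ℝ), npdf σ m x = stdNormalCDF (m / σ) := by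
  have harg : ∀ x : ℝ, -((x + m) - m) ^ 2 / (2 * σ ^ 2) = -(σ⁻¹ * x) ^ 2 / 2 := by
    intro x; ring
  have h1 : ∫ x in Ioi (0 : ℝ), npdf σ m x
      = ∫ x in Ioi (-m), (Real.sqrt (2 * Real.pi * σ ^ 2))⁻¹ * Real.exp (-(σ⁻¹ * x) ^ 2 / 2) := by
    have := setIntegral_comp_add_right_Ioi (fun x => npdf σ m (x + m)) 0 (-m)
    simp only [neg_add_cancel_right, zero_add] at this
    rw [this]
    unfold npdf
    simp_rw [harg]
  rw [h1, integral_comp_mul_left_Ioi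
    (fun y => (Real.sqrt (2 * Real.pi * σ ^ 2))⁻¹ * Real.exp (-y ^ 2 / 2)) _ (inv_pos.mpr hσ)]
  have h3 := integral_comp_neg_Ioi (σ⁻¹ * -m)
    (fun x => (Real.sqrt (2 * Real.pi * σ ^ 2))⁻¹ * Real.exp (-x ^ 2 / 2))
  simp only [neg_sq] at h3
  rw [h3, show -(σ⁻¹ * -m) = m / σ from by field_simp, stdNormalCDF, smul_eq_mul,
    ← integral_const_mul]
  congr 1
  ext x
  rw [sqrt_two_pi_sq hσ]
  have h4 : Real.sqrt (2 * Real.pi) ≠ 0 := by positivity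
  field_simp

lemma hasDerivAt_npdf_anti {σ : ℝ} (hσ : 0 < σ) (m x : ℝ) :
    HasDerivAt (fun x => -σ ^ 2 * (Real.sqrt (2 * Real.pi * σ ^ 2))⁻¹ *
      Real.exp (-(x - m) ^ 2 / (2 * σ ^ 2))) ((x - m) * npdf σ m x) x := by
  have h0 : HasDerivAt (fun x : ℝ => (x - m) ^ 2) (2 * (x - m)) x := by
    simpa using ((hasDerivAt_id x).sub_const m).fun_pow 2
  have hg : HasDerivAt (fun x : ℝ => -(x - m) ^ 2 / (2 * σ ^ 2))
      (-(2 * (x - m)) / (2 * σ ^ 2)) x := h0.neg.div_const _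
  have hF := (hg.exp).const_mul (-σ ^ 2 * (Real.sqrt (2 * Real.pi * σ ^ 2))⁻¹)
  refine hF.congr_deriv ?_
  unfold npdf
  have hσ2 : σ ^ 2 ≠ 0 := by positivity
  field_simp

lemma integral_sub_mul_npdf_Ioi {σ : ℝ} (hσ : 0 < σ) (m : ℝ) :
    ∫ x in Ioi (0 : ℝ), (x - m) * npdf σ m x = σ ^ 2 * npdf σ m 0 := by
  have h1 : Tendsto (fun x : ℝ => (x - m) ^ 2 / (2 * σ ^ 2)) atTop atTop :=
    ((tendsto_pow_atTop two_ne_zero).comp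
      (tendsto_atTop_add_const_right _ (-m) tendsto_id)).atTop_div_const (by positivity)
  have h3 : Tendsto (fun x : ℝ => -(x - m) ^ 2 / (2 * σ ^ 2)) atTop atBot := by
    simp_rw [neg_div]
    exact tendsto_neg_atTop_atBot.comp h1
  have h4 := (Real.tendsto_exp_atBot.comp h3).const_mul
    (-σ ^ 2 * (Real.sqrt (2 * Real.pi * σ ^ 2))⁻¹)
  rw [mul_zero] at h4
  have := integral_Ioi_of_hasDerivAt_of_tendsto' (a := 0)
    (fun x _ => hasDerivAt_npdf_anti hσ m x)
    ((integrable_sub_mul_npdf hσ m).integrableOn) h4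
  rw [this]
  unfold npdf
  ring

lemma key_Ioi {σ : ℝ} (hσ : 0 < σ) (μ a : ℝ) :
    ∫ x in Ioi (0 : ℝ), x * Real.exp (-a * x) * npdf σ μ x =
      Real.exp (a ^ 2 * σ ^ 2 / 2 - a * μ) *
        ((μ - a * σ ^ 2) * stdNormalCDF ((μ - a * σ ^ 2) / σ)) +
      σ * (Real.sqrt (2 * Real.pi))⁻¹ * Real.exp (-μ ^ 2 / (2 * σ ^ 2)) := by
  set m : ℝ := μ - a * σ ^ 2 with hm
  set K : ℝ := a ^ 2 * σ ^ 2 / 2 - a * μ with hK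
  have hσ2 : (σ : ℝ) ^ 2 ≠ 0 := by positivity
  have hexp : ∀ x : ℝ, Real.exp (-a * x) * Real.exp (-(x - μ) ^ 2 / (2 * σ ^ 2)) =
      Real.exp K * Real.exp (-(x - m) ^ 2 / (2 * σ ^ 2)) := by
    intro x
    rw [← Real.exp_add, ← Real.exp_add]
    congr 1
    rw [hm, hK]
    field_simp
    ring
  have hint : ∀ x : ℝ, x * Real.exp (-a * x) * npdf σ μ x =
      Real.exp K * ((x - m) * npdf σ m x) + Real.exp K * (m * npdf σ m x) := by
    intro x
    unfold npdf
    linear_combination (x * (Real.sqrt (2 * Real.pi * σ ^ 2))⁻¹) * hexp x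
  simp_rw [hint]
  rw [integral_add ((integrable_sub_mul_npdf hσ m).const_mul (Real.exp K)).integrableOn
      (((integrable_npdf hσ m).const_mul m).const_mul (Real.exp K)).integrableOn,
    integral_const_mul, integral_const_mul, integral_sub_mul_npdf_Ioi hσ m,
    integral_const_mul, integral_npdf_Ioi hσ m]
  have e1 : Real.exp K * Real.exp (-(0 - m) ^ 2 / (2 * σ ^ 2)) =
      Real.exp (-μ ^ 2 / (2 * σ ^ 2)) := by
    rw [← Real.exp_add]
    congr 1
    rw [hK, hm]
    field_simp
    ring
  have hS : Real.exp K * (σ ^ 2 * npdf σ m 0) =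
      σ * (Real.sqrt (2 * Real.pi))⁻¹ * Real.exp (-μ ^ 2 / (2 * σ ^ 2)) := by
    unfold npdf
    rw [sqrt_two_pi_sq hσ]
    have hs : Real.sqrt (2 * Real.pi) ≠ 0 := by positivity
    have hσ0 : σ ≠ 0 := hσ.ne'
    have h2 : (Real.sqrt (2 * Real.pi) * σ)⁻¹ * σ ^ 2 = σ * (Real.sqrt (2 * Real.pi))⁻¹ := by
      rw [mul_inv, pow_two, ← mul_assoc]
      field_simp
    linear_combination ((Real.sqrt (2 * Real.pi) * σ)⁻¹ * σ ^ 2) * e1 +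
      Real.exp (-μ ^ 2 / (2 * σ ^ 2)) * h2
  rw [hS]
  ring

lemma decomp {σ : ℝ} (hσ : 0 < σ) (μ a x : ℝ) :
    x * Real.exp (-a * x) * npdf σ μ x =
      Real.exp (a ^ 2 * σ ^ 2 / 2 - a * μ) * ((x - (μ - a * σ ^ 2)) * npdf σ (μ - a * σ ^ 2) x) +
      Real.exp (a ^ 2 * σ ^ 2 / 2 - a * μ) * ((μ - a * σ ^ 2) * npdf σ (μ - a * σ ^ 2) x) := by
  have hexp : Real.exp (-a * x) * Real.exp (-(x - μ) ^ 2 / (2 * σ ^ 2)) =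
      Real.exp (a ^ 2 * σ ^ 2 / 2 - a * μ) *
        Real.exp (-(x - (μ - a * σ ^ 2)) ^ 2 / (2 * σ ^ 2)) := by
    rw [← Real.exp_add, ← Real.exp_add]
    congr 1
    have hσ2 : (σ : ℝ) ^ 2 ≠ 0 := by positivity
    field_simp
    ring
  unfold npdf
  linear_combination (x * (Real.sqrt (2 * Real.pi * σ ^ 2))⁻¹) * hexp

lemma integrable_x_exp_npdf {σ : ℝ} (hσ : 0 < σ) (μ a : ℝ) :
    Integrable (fun x => x * Real.exp (-a * x) * npdf σ μ x) := by
  refine (((integrable_sub_mul_npdf hσ (μ - a * σ ^ 2)).const_mul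
      (Real.exp (a ^ 2 * σ ^ 2 / 2 - a * μ))).add
    (((integrable_npdf hσ (μ - a * σ ^ 2)).const_mul (μ - a * σ ^ 2)).const_mul
      (Real.exp (a ^ 2 * σ ^ 2 / 2 - a * μ)))).congr (Eventually.of_forall fun x => ?_)
  simp only [Pi.add_apply]
  rw [decomp hσ μ a x]

lemma npdf_neg {σ : ℝ} (μ x : ℝ) : npdf σ (-μ) (-x) = npdf σ μ x := by
  unfold npdf
  rw [show ((-x) - (-μ)) ^ 2 = (x - μ) ^ 2 from by ring]

/-- For `Z ~ N(μ, σ²)` with `σ > 0` and `a : ℝ`,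
`E[|Z| e^{-a|Z|}] = −aσ² e^{a²σ²/2} (e^{aμ}Φ(−(μ+aσ²)/σ) + e^{-aμ}Φ((μ−aσ²)/σ))
  − μ e^{a²σ²/2} (e^{aμ}Φ(−(μ+aσ²)/σ) − e^{-aμ}Φ((μ−aσ²)/σ)) + σ √(2/π) e^{−μ²/(2σ²)}`. -/
theorem expectation_abs_mul_exp_neg_mul_abs_normal (μ : ℝ) (σ : ℝ) (hσ : 0 < σ) (a : ℝ) :
    ∫ x, |x| * Real.exp (-a * |x|) ∂(gaussianReal μ (Real.toNNReal (σ ^ 2))) =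
      -(a * σ ^ 2) * Real.exp (a ^ 2 * σ ^ 2 / 2) *
          (Real.exp (a * μ) * stdNormalCDF (-((μ + a * σ ^ 2) / σ)) +
            Real.exp (-(a * μ)) * stdNormalCDF ((μ - a * σ ^ 2) / σ)) -
        μ * Real.exp (a ^ 2 * σ ^ 2 / 2) *
          (Real.exp (a * μ) * stdNormalCDF (-((μ + a * σ ^ 2) / σ)) -
            Real.exp (-(a * μ)) * stdNormalCDF ((μ - a * σ ^ 2) / σ)) +
        σ * Real.sqrt (2 / Real.pi) * Real.exp (-μ ^ 2 / (2 * σ ^ 2)) := by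
  set v : NNReal := Real.toNNReal (σ ^ 2) with hv
  have hv0 : v ≠ 0 := by
    simp only [hv, ne_eq, Real.toNNReal_eq_zero, not_le]
    positivity
  have hcoe : ((v : NNReal) : ℝ) = σ ^ 2 := Real.coe_toNNReal _ (sq_nonneg σ)
  have hpdf : ∀ x, gaussianPDFReal μ v x = npdf σ μ x := by
    intro x
    rw [gaussianPDFReal, npdf, hcoe]
  -- step 1: density
  have step1 : ∫ x, |x| * Real.exp (-a * |x|) ∂(gaussianReal μ v) =
      ∫ x, |x| * Real.exp (-a * |x|) * npdf σ μ x := by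
    rw [gaussianReal_of_var_ne_zero μ hv0]
    have : (gaussianPDF μ v) = fun x =>
        ((Real.toNNReal (gaussianPDFReal μ v x) : NNReal) : ENNReal) := rfl
    rw [this, integral_withDensity_eq_integral_smul
      ((measurable_gaussianPDFReal μ v).real_toNNReal) _]
    refine integral_congr_ae (Eventually.of_forall fun x => ?_)
    dsimp only
    rw [NNReal.smul_def, smul_eq_mul,
      Real.coe_toNNReal _ (gaussianPDFReal_nonneg μ v x), hpdf x]
    ring
  rw [step1]
  -- integrability of the two pieces
  have hIoi : IntegrableOn (fun x => |x| * Real.exp (-a * |x|) * npdf σ μ x) (Ioi 0) := by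
    refine ((integrable_x_exp_npdf hσ μ a).integrableOn).congr_fun (fun x hx => ?_)
      measurableSet_Ioi
    rw [abs_of_pos hx]
  have hIic : IntegrableOn (fun x => |x| * Real.exp (-a * |x|) * npdf σ μ x) (Iic 0) := by
    refine ((integrable_x_exp_npdf hσ μ (-a)).neg.integrableOn).congr_fun (fun x hx => ?_)
      measurableSet_Iic
    simp only [Pi.neg_apply]
    rw [abs_of_nonpos hx]
    ring_nf
  rw [← intervalIntegral.integral_Iic_add_Ioi hIic hIoi]
  -- Ioi piece
  have hIoiEq : ∫ x in Ioi (0 : ℝ), |x| * Real.exp (-a * |x|) * npdf σ μ x =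
      Real.exp (a ^ 2 * σ ^ 2 / 2 - a * μ) *
        ((μ - a * σ ^ 2) * stdNormalCDF ((μ - a * σ ^ 2) / σ)) +
      σ * (Real.sqrt (2 * Real.pi))⁻¹ * Real.exp (-μ ^ 2 / (2 * σ ^ 2)) := by
    rw [← key_Ioi hσ μ a]
    refine setIntegral_congr_fun measurableSet_Ioi (fun x hx => ?_)
    rw [abs_of_pos hx]
  -- Iic piece
  have hIicEq : ∫ x in Iic (0 : ℝ), |x| * Real.exp (-a * |x|) * npdf σ μ x =
      Real.exp (a ^ 2 * σ ^ 2 / 2 - a * -μ) *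
        ((-μ - a * σ ^ 2) * stdNormalCDF ((-μ - a * σ ^ 2) / σ)) +
      σ * (Real.sqrt (2 * Real.pi))⁻¹ * Real.exp (-(-μ) ^ 2 / (2 * σ ^ 2)) := by
    rw [← key_Ioi hσ (-μ) a]
    have hrefl := integral_comp_neg_Iic (0 : ℝ)
      (fun u => u * Real.exp (-a * u) * npdf σ (-μ) u)
    rw [show (-(0 : ℝ)) = 0 from by norm_num] at hrefl
    rw [← hrefl]
    refine setIntegral_congr_fun measurableSet_Iic (fun x hx => ?_)
    rw [npdf_neg, abs_of_nonpos hx]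
  rw [hIicEq, hIoiEq]
  -- final algebra
  have hsqrt : Real.sqrt (2 / Real.pi) = 2 * (Real.sqrt (2 * Real.pi))⁻¹ := by
    have hs : Real.sqrt (2 * Real.pi) ≠ 0 := by positivity
    have hmul : Real.sqrt (2 / Real.pi) * Real.sqrt (2 * Real.pi) = 2 := by
      rw [← Real.sqrt_mul (by positivity)]
      rw [show (2 / Real.pi) * (2 * Real.pi) = 4 from by field_simp; ring]
      rw [show (4 : ℝ) = 2 ^ 2 from by norm_num, Real.sqrt_sq (by norm_num)]
    rw [eq_div_of_mul_eq hs hmul, div_eq_mul_inv]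
  rw [hsqrt,
    show a ^ 2 * σ ^ 2 / 2 - a * -μ = a ^ 2 * σ ^ 2 / 2 + a * μ from by ring, Real.exp_add,
    show a ^ 2 * σ ^ 2 / 2 - a * μ = a ^ 2 * σ ^ 2 / 2 + -(a * μ) from by ring, Real.exp_add,
    show ((-μ : ℝ) - a * σ ^ 2) / σ = -((μ + a * σ ^ 2) / σ) from by ring,
    show (-(-μ : ℝ) ^ 2 / (2 * σ ^ 2)) = -μ ^ 2 / (2 * σ ^ 2) from by ring]
  ring
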